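/- Let Y be a Hausdorff topological space and B, C ⊆ Y compact subsets such that both B and C are second countable in their subspace topologies. Then B ∪ C is second countable in its subspace topology. -/

import Mathlib

open TopologicalSpace Metric Set Topology

theorem union_of_compact_secondCountable
    {Y : Type*} [TopologicalSpace Y] [T2Space Y]
    (B C : Set Y) (hB : IsCompact B) (hC : IsCompact C)
    [SecondCountableTopology B] [SecondCountableTopology C] :
    SecondCountableTopology ↥(B ∪ C) := by
  classical
  by_cases hBe : B = ∅
  · have h : B ∪ C = C := by simp [hBe]
    exact (Homeomorph.setCongr h).isEmbedding.secondCountableTopology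
  by_cases hCe : C = ∅
  · have h : B ∪ C = B := by simp [hCe]
    exact (Homeomorph.setCongr h).isEmbedding.secondCountableTopology
  haveI : Nonempty B := Set.nonempty_coe_sort.mpr (Set.nonempty_iff_ne_empty.mpr hBe)
  haveI : Nonempty C := Set.nonempty_coe_sort.mpr (Set.nonempty_iff_ne_empty.mpr hCe)
  haveI : CompactSpace ↥(B ∪ C) := isCompact_iff_compactSpace.mp (hB.union hC)
  haveI : CompactSpace B := isCompact_iff_compactSpace.mp hB
  haveI : CompactSpace C := isCompact_iff_compactSpace.mp hC
  letI mB : MetricSpace B := TopologicalSpace.metrizableSpaceMetric B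
  letI mC : MetricSpace C := TopologicalSpace.metrizableSpaceMetric C
  obtain ⟨u, hu⟩ := TopologicalSpace.exists_dense_seq ↥B
  obtain ⟨v, hv⟩ := TopologicalSpace.exists_dense_seq ↥C
  set X := ↥(B ∪ C) with hX
  set B' : Set X := Subtype.val ⁻¹' B with hB'
  set C' : Set X := Subtype.val ⁻¹' C with hC'
  have hB'c : IsClosed B' := hB.isClosed.preimage continuous_subtype_val
  have hC'c : IsClosed C' := hC.isClosed.preimage continuous_subtype_val
  have heBc : Continuous (fun x : B' => (⟨(x : X), x.2⟩ : B)) :=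
    Continuous.subtype_mk (continuous_subtype_val.comp continuous_subtype_val) _
  have heCc : Continuous (fun x : C' => (⟨(x : X), x.2⟩ : C)) :=
    Continuous.subtype_mk (continuous_subtype_val.comp continuous_subtype_val) _
  set S : Set ↥B := Subtype.val ⁻¹' C with hS
  have hScl : IsClosed S := hC.isClosed.preimage continuous_subtype_val
  -- Tietze extensions of distance functions on B
  have hFn : ∀ n : ℕ, ∃ F : C(X, ℝ), ∀ x : B', F x = dist (⟨(x : X), x.2⟩ : B) (u n) := by
    intro n
    obtain ⟨F, hF⟩ := ContinuousMap.exists_restrict_eq hB'c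
      ⟨fun x : B' => dist (⟨(x : X), x.2⟩ : B) (u n), heBc.dist continuous_const⟩
    exact ⟨F, fun x => congrFun (congrArg DFunLike.coe hF) x⟩
  choose F hF using hFn
  have hGn : ∀ n : ℕ, ∃ G : C(X, ℝ), ∀ x : C', G x = dist (⟨(x : X), x.2⟩ : C) (v n) := by
    intro n
    obtain ⟨G, hG⟩ := ContinuousMap.exists_restrict_eq hC'c
      ⟨fun x : C' => dist (⟨(x : X), x.2⟩ : C) (v n), heCc.dist continuous_const⟩
    exact ⟨G, fun x => congrFun (congrArg DFunLike.coe hG) x⟩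
  choose G hG using hGn
  -- a function positive on B \ C, zero on C
  have hDcont : Continuous (fun x : B' => if S.Nonempty then infDist (⟨(x : X), x.2⟩ : B) S else 1) := by
    by_cases hSne : S.Nonempty
    · simp only [hSne, if_true]
      exact (continuous_infDist_pt S).comp heBc
    · simp only [hSne, if_false]
      exact continuous_const
  obtain ⟨D, hD⟩ := ContinuousMap.exists_restrict_eq hB'c
    ⟨fun x : B' => if S.Nonempty then infDist (⟨(x : X), x.2⟩ : B) S else 1, hDcont⟩
  have hDval : ∀ x : B', D x = if S.Nonempty then infDist (⟨(x : X), x.2⟩ : B) S else 1 :=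
    fun x => congrFun (congrArg DFunLike.coe hD) x
  set g : X → ℝ := C'.piecewise (fun _ => 0) D with hg
  have hgC : ∀ x : X, (x : Y) ∈ C → g x = 0 := fun x hx => Set.piecewise_eq_of_mem _ _ _ hx
  have hgB : ∀ x : X, (x : Y) ∈ B → (x : Y) ∉ C → 0 < g x := by
    intro x hxB hxC
    have : g x = D x := Set.piecewise_eq_of_notMem _ _ _ hxC
    rw [this, hDval ⟨x, hxB⟩]
    by_cases hSne : S.Nonempty
    · simp only [hSne, if_true]
      exact (hScl.notMem_iff_infDist_pos hSne).mp hxC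
    · simp only [hSne, if_false]; norm_num
  have hgcont : Continuous g := by
    apply Continuous.piecewise _ continuous_const D.continuous
    intro a ha
    have haC : a ∈ C' := hC'c.frontier_subset ha
    have haB : a ∈ B' := by
      rw [frontier_eq_closure_inter_closure] at ha
      have h1 : C'ᶜ ⊆ B' := by
        intro x hx
        rcases x.2 with h | h
        · exact h
        · exact absurd h hx
      have := (closure_mono h1) ha.2
      rwa [hB'c.closure_eq] at this
    have hmem : (⟨(a : Y), haB⟩ : B) ∈ S := haC
    have := hDval ⟨a, haB⟩
    simp only [Set.nonempty_of_mem hmem, if_true] at this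
    rw [this, infDist_zero_of_mem hmem]
  -- key separation lemmas inside B and inside C
  have keyB : ∀ (x y : X) (hx : (x : Y) ∈ B) (hy : (y : Y) ∈ B),
      (∀ n, dist (⟨(x : Y), hx⟩ : B) (u n) = dist (⟨(y : Y), hy⟩ : B) (u n)) → x = y := by
    intro x y hx hy h
    set p : B := ⟨(x : Y), hx⟩
    set q : B := ⟨(y : Y), hy⟩
    have hpq : p = q := by
      by_contra hne
      have hd : 0 < dist p q := dist_pos.mpr hne
      obtain ⟨n, hn⟩ := Metric.denseRange_iff.mp hu p (dist p q / 2) (by linarith)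
      have : dist p q ≤ dist p (u n) + dist q (u n) := dist_triangle_right p q (u n)
      rw [← h n] at this
      linarith
    have h' : (p : Y) = (q : Y) := congrArg Subtype.val hpq
    exact Subtype.ext h'
  have keyC : ∀ (x y : X) (hx : (x : Y) ∈ C) (hy : (y : Y) ∈ C),
      (∀ n, dist (⟨(x : Y), hx⟩ : C) (v n) = dist (⟨(y : Y), hy⟩ : C) (v n)) → x = y := by
    intro x y hx hy h
    set p : C := ⟨(x : Y), hx⟩
    set q : C := ⟨(y : Y), hy⟩
    have hpq : p = q := by
      by_contra hne
      have hd : 0 < dist p q := dist_pos.mpr hne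
      obtain ⟨n, hn⟩ := Metric.denseRange_iff.mp hv p (dist p q / 2) (by linarith)
      have : dist p q ≤ dist p (v n) + dist q (v n) := dist_triangle_right p q (v n)
      rw [← h n] at this
      linarith
    have h' : (p : Y) = (q : Y) := congrArg Subtype.val hpq
    exact Subtype.ext h'
  -- the embedding into a second countable space
  set Φ : X → (ℕ → ℝ) × (ℕ → ℝ) × ℝ := fun x => (fun n => F n x, fun n => G n x, g x) with hΦ
  have hΦc : Continuous Φ := by
    refine Continuous.prodMk ?_ (Continuous.prodMk ?_ hgcont)
    · exact continuous_pi fun n => (F n).continuous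
    · exact continuous_pi fun n => (G n).continuous
  have hΦi : Function.Injective Φ := by
    intro x y hxy
    have h1 : ∀ n, F n x = F n y := fun n => congrFun (congrArg Prod.fst hxy) n
    have h2 : ∀ n, G n x = G n y := fun n => congrFun (congrArg Prod.fst (congrArg Prod.snd hxy)) n
    have h3 : g x = g y := congrArg Prod.snd (congrArg Prod.snd hxy)
    by_cases hxB : (x : Y) ∈ B
    · by_cases hyB : (y : Y) ∈ B
      · refine keyB x y hxB hyB fun n => ?_
        have ex := hF n ⟨x, hxB⟩
        have ey := hF n ⟨y, hyB⟩
        rw [← ex, ← ey]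
        exact h1 n
      · have hyC : (y : Y) ∈ C := y.2.resolve_left hyB
        by_cases hxC : (x : Y) ∈ C
        · refine keyC x y hxC hyC fun n => ?_
          have ex := hG n ⟨x, hxC⟩
          have ey := hG n ⟨y, hyC⟩
          rw [← ex, ← ey]
          exact h2 n
        · exfalso
          have := hgB x hxB hxC
          rw [h3, hgC y hyC] at this
          exact lt_irrefl 0 this
    · have hxC : (x : Y) ∈ C := x.2.resolve_left hxB
      by_cases hyC : (y : Y) ∈ C
      · refine keyC x y hxC hyC fun n => ?_
        have ex := hG n ⟨x, hxC⟩
        have ey := hG n ⟨y, hyC⟩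
        rw [← ex, ← ey]
        exact h2 n
      · exfalso
        have hyB : (y : Y) ∈ B := y.2.resolve_right hyC
        have := hgB y hyB hyC
        rw [← h3, hgC x hxC] at this
        exact lt_irrefl 0 this
  exact (hΦc.isClosedEmbedding hΦi).isEmbedding.secondCountableTopology
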